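/- arXiv:1310.5451 — 2 statements merged into one kernel-verified Lean document; each statement's English description precedes it below -/
import Mathlib

section
/- Let r ≥ 1, d = 2^r - 1, and let P be the d × d 0-1 matrix whose j-th row consists of the indicator coefficients b_{K,k}(j) of the dyadic decomposition of (0, j2^{-r}] into odd dyadic blocks (at most one block per scale K = 0,…,r-1). Then P is invertible with determinant 1, and for any x, y ∈ ℝ^d, the supremum distance satisfies max_j |(P(u - v))_j| ≤ ∑_{K=0}^{r-1} max_{k ∈ 𝓔(K)} |u^{(K,k)} - v^{(K,k)}|, where u = P^{-1}x, v = P^{-1}y and coordinates are indexed by (K,k) with k ∈ 𝓔(K) the odd integers in [1, 2^{r-K}-1]. In particular, every function f that is 1-Lipschitz for the sup-norm on ℝ^d induces a function f∘P that is 1-Lipschitz for the distance d*(u,v) = ∑_K max_k |u^{(K,k)} - v^{(K,k)}|. -/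
open scoped BigOperators

/-- the 0-1 matrix `P` whose row `j` encodes the dyadic decomposition of
`(0, (j+1)2^{-r}]` into odd dyadic blocks (columns are indexed by `c`, the column `c`
corresponding to the block `(K,k)` with `k 2^K = c+1`, `k` odd) is invertible with
determinant `1`; moreover `max_j |(P(u-v))_j| ≤ ∑_K max_{k at level K} |u_{(K,k)} - v_{(K,k)}|`
for `u = P⁻¹ x`, `v = P⁻¹ y`, so that any `f` 1-Lipschitz for the sup-norm yields `f ∘ P`
1-Lipschitz for the distance `d*(u,v) = ∑_K max_k |u^{(K,k)} - v^{(K,k)}|`. -/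
theorem dyadic_matrix_det_one_and_lipschitz
    (r : ℕ) (hr : 1 ≤ r) (d : ℕ) (hd : d = 2 ^ r - 1)
    (b : ℕ → ℕ → ℕ → Bool)
    (hb1 : ∀ j K k, 1 ≤ j → j ≤ 2 ^ r - 1 → b j K k = true →
      K < r ∧ Odd k ∧ 1 ≤ k ∧ k ≤ 2 ^ (r - K) - 1)
    (hb2 : ∀ j K k k', b j K k = true → b j K k' = true → k = k')
    (hb3 : ∀ j, 1 ≤ j → j ≤ 2 ^ r - 1 →
      ((Set.univ : Set (ℕ × ℕ)).PairwiseDisjoint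
        (fun p : ℕ × ℕ =>
          if b j p.1 p.2 = true then
            Set.Ioc (((p.2 : ℝ) - 1) * 2 ^ ((p.1 : ℤ) - (r : ℤ)))
              ((p.2 : ℝ) * 2 ^ ((p.1 : ℤ) - (r : ℤ)))
          else ∅)) ∧
      Set.Ioc (0 : ℝ) ((j : ℝ) * 2 ^ (-(r : ℤ))) =
        ⋃ K : ℕ, ⋃ k ∈ {k : ℕ | b j K k = true},
          Set.Ioc (((k : ℝ) - 1) * 2 ^ ((K : ℤ) - (r : ℤ)))
            ((k : ℝ) * 2 ^ ((K : ℤ) - (r : ℤ))))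
    (P : Matrix (Fin d) (Fin d) ℝ)
    (hP : ∀ j c : Fin d, P j c =
      if b ((j : ℕ) + 1) (padicValNat 2 ((c : ℕ) + 1))
          (((c : ℕ) + 1) / 2 ^ padicValNat 2 ((c : ℕ) + 1)) = true
        then 1 else 0) :
    P.det = 1 ∧
    (∀ x y : Fin d → ℝ,
      (⨆ j : Fin d, |P.mulVec (P⁻¹.mulVec x - P⁻¹.mulVec y) j|) ≤
        ∑ K ∈ Finset.range r, ⨆ c : Fin d,
          (if padicValNat 2 ((c : ℕ) + 1) = K
            then |P⁻¹.mulVec x c - P⁻¹.mulVec y c| else 0)) ∧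
    (∀ f : (Fin d → ℝ) → ℝ,
      (∀ x y : Fin d → ℝ, |f x - f y| ≤ ⨆ i, |x i - y i|) →
      ∀ u v : Fin d → ℝ,
        |f (P.mulVec u) - f (P.mulVec v)| ≤
          ∑ K ∈ Finset.range r, ⨆ c : Fin d,
            (if padicValNat 2 ((c : ℕ) + 1) = K then |u c - v c| else 0)) := by
  haveI : Fact (Nat.Prime 2) := ⟨Nat.prime_two⟩
  have h2r : 2 ≤ 2 ^ r := by
    calc 2 = 2 ^ 1 := rfl
    _ ≤ 2 ^ r := Nat.pow_le_pow_right (by norm_num) hr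
  have hd1 : 1 ≤ d := by omega
  haveI : Nonempty (Fin d) := ⟨⟨0, hd1⟩⟩
  -- basic facts about columns
  have hcol : ∀ c : Fin d,
      (((c : ℕ) + 1) / 2 ^ padicValNat 2 ((c : ℕ) + 1)) * 2 ^ padicValNat 2 ((c : ℕ) + 1)
        = (c : ℕ) + 1 ∧
      Odd (((c : ℕ) + 1) / 2 ^ padicValNat 2 ((c : ℕ) + 1)) ∧
      padicValNat 2 ((c : ℕ) + 1) < r := by
    intro c
    have hn0 : (c : ℕ) + 1 ≠ 0 := by omega
    have hdvd : 2 ^ padicValNat 2 ((c : ℕ) + 1) ∣ (c : ℕ) + 1 := pow_padicValNat_dvd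
    refine ⟨Nat.div_mul_cancel hdvd, ?_, ?_⟩
    · have h2 := Nat.not_dvd_ordCompl Nat.prime_two hn0
      rw [Nat.factorization_def _ Nat.prime_two] at h2
      exact Nat.odd_iff.mpr (Nat.two_dvd_ne_zero.mp h2)
    · have hle : 2 ^ padicValNat 2 ((c : ℕ) + 1) ≤ (c : ℕ) + 1 :=
        Nat.le_of_dvd (by omega) hdvd
      have hlt : (c : ℕ) + 1 < 2 ^ r := by
        have := c.isLt; omega
      have : 2 ^ padicValNat 2 ((c : ℕ) + 1) < 2 ^ r := lt_of_le_of_lt hle hlt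
      exact (Nat.pow_lt_pow_iff_right (by norm_num)).mp this
  have hcinj : ∀ c c' : Fin d,
      padicValNat 2 ((c : ℕ) + 1) = padicValNat 2 ((c' : ℕ) + 1) →
      ((c : ℕ) + 1) / 2 ^ padicValNat 2 ((c : ℕ) + 1)
        = ((c' : ℕ) + 1) / 2 ^ padicValNat 2 ((c' : ℕ) + 1) → c = c' := by
    intro c c' hK hk
    have h1 := (hcol c).1
    have h2 := (hcol c').1
    rw [hk, hK] at h1
    exact Fin.ext (by omega)
  -- entries are 0/1 and nonzero entries come from `b`
  have hPb : ∀ j c : Fin d, P j c ≠ 0 →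
      b ((j : ℕ) + 1) (padicValNat 2 ((c : ℕ) + 1))
        (((c : ℕ) + 1) / 2 ^ padicValNat 2 ((c : ℕ) + 1)) = true ∧ P j c = 1 := by
    intro j c h
    rw [hP] at h ⊢
    by_cases hb : b ((j : ℕ) + 1) (padicValNat 2 ((c : ℕ) + 1))
        (((c : ℕ) + 1) / 2 ^ padicValNat 2 ((c : ℕ) + 1)) = true
    · simp [hb]
    · simp [hb] at h
  have hrow : ∀ j : Fin d, 1 ≤ (j : ℕ) + 1 ∧ (j : ℕ) + 1 ≤ 2 ^ r - 1 := by
    intro j; have := j.isLt; omega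
  -- if b (j+1) K k = true then k * 2^K ≤ j+1
  have hupper : ∀ (j : Fin d) (K k : ℕ), b ((j : ℕ) + 1) K k = true →
      k * 2 ^ K ≤ (j : ℕ) + 1 := by
    intro j K k hb
    obtain ⟨hj1, hj2⟩ := hrow j
    obtain ⟨-, -, hk1, -⟩ := hb1 _ _ _ hj1 hj2 hb
    obtain ⟨-, hU⟩ := hb3 _ hj1 hj2
    have hzpos : (0 : ℝ) < 2 ^ ((K : ℤ) - (r : ℤ)) := zpow_pos (by norm_num) _
    have hmem : (k : ℝ) * 2 ^ ((K : ℤ) - (r : ℤ)) ∈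
        Set.Ioc (((k : ℝ) - 1) * 2 ^ ((K : ℤ) - (r : ℤ)))
          ((k : ℝ) * 2 ^ ((K : ℤ) - (r : ℤ))) :=
      ⟨mul_lt_mul_of_pos_right (by linarith) hzpos, le_refl _⟩
    have hsub : (k : ℝ) * 2 ^ ((K : ℤ) - (r : ℤ)) ∈
        Set.Ioc (0 : ℝ) ((((j : ℕ) + 1 : ℕ) : ℝ) * 2 ^ (-(r : ℤ))) := by
      rw [hU]
      exact Set.mem_iUnion.mpr ⟨K, Set.mem_iUnion₂.mpr ⟨k, hb, hmem⟩⟩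
    have h2 : (k : ℝ) * 2 ^ ((K : ℤ) - (r : ℤ)) ≤ (((j : ℕ) + 1 : ℕ) : ℝ) * 2 ^ (-(r : ℤ)) :=
      hsub.2
    rw [sub_eq_add_neg, zpow_add₀ (by norm_num : (2 : ℝ) ≠ 0), ← mul_assoc] at h2
    have h3 : (k : ℝ) * 2 ^ (K : ℤ) ≤ (((j : ℕ) + 1 : ℕ) : ℝ) :=
      le_of_mul_le_mul_right h2 (zpow_pos (by norm_num) _)
    rw [zpow_natCast] at h3
    exact_mod_cast h3
  -- strict lower triangularity
  have htri : ∀ j c : Fin d, (j : ℕ) < (c : ℕ) → P j c = 0 := by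
    intro j c hjc
    by_contra h
    obtain ⟨hb, -⟩ := hPb j c h
    have := hupper j _ _ hb
    rw [Nat.div_mul_cancel (pow_padicValNat_dvd)] at this
    omega
  -- diagonal entries are 1
  have hdiag : ∀ j : Fin d, P j j = 1 := by
    intro j
    obtain ⟨hj1, hj2⟩ := hrow j
    obtain ⟨-, hU⟩ := hb3 _ hj1 hj2
    have hrpos : (0 : ℝ) < 2 ^ (-(r : ℤ)) := zpow_pos (by norm_num) _
    have hmem : ((((j : ℕ) + 1 : ℕ) : ℝ)) * 2 ^ (-(r : ℤ)) ∈
        Set.Ioc (0 : ℝ) ((((j : ℕ) + 1 : ℕ) : ℝ) * 2 ^ (-(r : ℤ))) := by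
      constructor
      · have : (0 : ℝ) < (((j : ℕ) + 1 : ℕ) : ℝ) := by positivity
        positivity
      · exact le_refl _
    rw [hU] at hmem
    obtain ⟨K, hmem⟩ := Set.mem_iUnion.mp hmem
    obtain ⟨k, hbk, hmem⟩ := Set.mem_iUnion₂.mp hmem
    have hble : k * 2 ^ K ≤ (j : ℕ) + 1 := hupper j K k hbk
    obtain ⟨-, hodd, hk1, -⟩ := hb1 _ _ _ hj1 hj2 hbk
    -- from membership: (j+1) * 2^{-r} ≤ k * 2^{K - r}
    have h2 : (((j : ℕ) + 1 : ℕ) : ℝ) * 2 ^ (-(r : ℤ)) ≤ (k : ℝ) * 2 ^ ((K : ℤ) - (r : ℤ)) :=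
      hmem.2
    rw [sub_eq_add_neg, zpow_add₀ (by norm_num : (2 : ℝ) ≠ 0), ← mul_assoc] at h2
    have h3 : (((j : ℕ) + 1 : ℕ) : ℝ) ≤ (k : ℝ) * 2 ^ (K : ℤ) :=
      le_of_mul_le_mul_right h2 hrpos
    rw [zpow_natCast] at h3
    have h4 : (j : ℕ) + 1 ≤ k * 2 ^ K := by exact_mod_cast h3
    have heq : k * 2 ^ K = (j : ℕ) + 1 := le_antisymm hble h4
    have hK : padicValNat 2 ((j : ℕ) + 1) = K := by
      rw [← heq, padicValNat.mul (by omega) (by positivity),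
        padicValNat.prime_pow,
        padicValNat.eq_zero_of_not_dvd (by
          intro hdvd
          have := Nat.odd_iff.mp hodd
          omega), zero_add]
    have hk : ((j : ℕ) + 1) / 2 ^ padicValNat 2 ((j : ℕ) + 1) = k := by
      rw [hK, ← heq, Nat.mul_div_cancel _ (by positivity : 0 < 2 ^ K)]
    rw [hP, hk, hK, hbk]
    simp
  -- determinant
  have hdet : P.det = 1 := by
    have hBT : P.BlockTriangular OrderDual.toDual := by
      intro i j hij
      exact htri i j hij
    rw [Matrix.det_of_lowerTriangular P hBT]
    simp [hdiag]
  -- key estimate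
  have key : ∀ (w : Fin d → ℝ) (j : Fin d),
      |P.mulVec w j| ≤ ∑ K ∈ Finset.range r, ⨆ c : Fin d,
        (if padicValNat 2 ((c : ℕ) + 1) = K then |w c| else 0) := by
    intro w j
    set g : ℕ → Fin d → ℝ := fun K c => if padicValNat 2 ((c : ℕ) + 1) = K then |w c| else 0
      with hg
    have hbdd : ∀ K, BddAbove (Set.range (g K)) :=
      fun K => Set.Finite.bddAbove (Set.finite_range _)
    have hle : ∀ (K : ℕ) (c : Fin d), padicValNat 2 ((c : ℕ) + 1) = K →
        |w c| ≤ ⨆ c' : Fin d, g K c' := by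
      intro K c hK
      have := le_ciSup (hbdd K) c
      simpa [hg, hK] using this
    have hnonneg : ∀ K, 0 ≤ ⨆ c' : Fin d, g K c' := by
      intro K
      refine le_trans ?_ (le_ciSup (hbdd K) (Classical.arbitrary _))
      simp only [hg]
      positivity
    have hsum : P.mulVec w j = ∑ K ∈ Finset.range r,
        ∑ c ∈ Finset.univ.filter (fun c : Fin d => padicValNat 2 ((c : ℕ) + 1) = K),
          P j c * w c := by
      rw [Matrix.mulVec, dotProduct]
      rw [Finset.sum_fiberwise_of_maps_to
        (fun c _ => Finset.mem_range.mpr (hcol c).2.2)]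
    rw [hsum]
    refine (Finset.abs_sum_le_sum_abs _ _).trans (Finset.sum_le_sum ?_)
    intro K _
    by_cases hex : ∃ c ∈ Finset.univ.filter
        (fun c : Fin d => padicValNat 2 ((c : ℕ) + 1) = K), P j c ≠ 0
    · obtain ⟨c₀, hc₀, hP0⟩ := hex
      have hc₀K : padicValNat 2 ((c₀ : ℕ) + 1) = K := (Finset.mem_filter.mp hc₀).2
      obtain ⟨hb₀, hP1⟩ := hPb j c₀ hP0
      have hsum2 : ∑ c ∈ Finset.univ.filter
          (fun c : Fin d => padicValNat 2 ((c : ℕ) + 1) = K), P j c * w c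
          = P j c₀ * w c₀ := by
        refine Finset.sum_eq_single_of_mem c₀ hc₀ ?_
        intro c hc hne
        have hcK : padicValNat 2 ((c : ℕ) + 1) = K := (Finset.mem_filter.mp hc).2
        by_contra hne0
        have hPc : P j c ≠ 0 := by
          intro h0; rw [h0, zero_mul] at hne0; exact hne0 rfl
        obtain ⟨hbc, -⟩ := hPb j c hPc
        rw [hcK.trans hc₀K.symm] at hbc
        have hkk := hb2 _ _ _ _ hbc hb₀
        exact hne (hcinj c c₀ (hcK.trans hc₀K.symm) (by rw [hcK.trans hc₀K.symm]; exact hkk))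
      rw [hsum2, hP1, one_mul]
      exact hle K c₀ hc₀K
    · push_neg at hex
      have : ∑ c ∈ Finset.univ.filter
          (fun c : Fin d => padicValNat 2 ((c : ℕ) + 1) = K), P j c * w c = 0 := by
        refine Finset.sum_eq_zero ?_
        intro c hc
        rw [hex c hc, zero_mul]
      rw [this, abs_zero]
      exact hnonneg K
  refine ⟨hdet, ?_, ?_⟩
  · intro x y
    refine ciSup_le fun j => (key _ j).trans (le_of_eq ?_)
    simp [Pi.sub_apply]
  · intro f hf u v
    have h1 : |f (P.mulVec u) - f (P.mulVec v)| ≤ ⨆ i, |P.mulVec (u - v) i| := by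
      have := hf (P.mulVec u) (P.mulVec v)
      simpa [Matrix.mulVec_sub] using this
    refine h1.trans ((ciSup_le fun j => key (u - v) j).trans (le_of_eq ?_))
    simp [Pi.sub_apply]
end

section
/- For a centered Gaussian variable N ~ N(0,1), for every nonnegative integer m and a > 0, the m-th directional derivative formula holds: for u, x ∈ ℝ^d, D^mφ_a(u)·x^{⊗m} = φ_a(u) ∑_{ℓ=0}^{[m/2]} c_{m,ℓ} a^{-2ℓ} ‖x‖₂^{2ℓ} ( ⟨u,x⟩/a² )^{m-2ℓ}, where φ_a is the N(0,a²I_d) density and the coefficients satisfy: c_{m,0} = (-1)^m for all m ≥ 0; c_{2,1} = -1; c_{m+1,ℓ} = (m - 2ℓ + 2) c_{m,ℓ-1} - c_{m,ℓ} for 1 ≤ ℓ ≤ [m/2], m ≥ 2; c_{m+1,[(m+1)/2]} = c_{m,[m/2]} if m is odd and c_{m+1,[(m+1)/2]} = c_{m+1,[m/2]} if m is even. -/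
open MeasureTheory

/-- The density of the `N(0, a² I_d)` law on `ℝ^d`. -/
noncomputable def gaussianDensity (d : ℕ) (a : ℝ) (u : EuclideanSpace ℝ (Fin d)) : ℝ :=
  (2 * Real.pi * a ^ 2) ^ (-(d : ℝ) / 2) * Real.exp (-‖u‖ ^ 2 / (2 * a ^ 2))

noncomputable def myc : ℕ → ℕ → ℝ
  | 0, 0 => 1
  | 0, _ + 1 => 0
  | m + 1, 0 => -myc m 0
  | m + 1, ℓ + 1 => ((m : ℝ) - 2 * ℓ) * myc m ℓ - myc m (ℓ + 1)

lemma myc_zero (m : ℕ) : myc m 0 = (-1 : ℝ) ^ m := by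
  induction m with
  | zero => simp [myc]
  | succ n ih => rw [myc, ih]; ring

lemma myc_eq_zero : ∀ m ℓ : ℕ, m < 2 * ℓ → myc m ℓ = 0 := by
  intro m
  induction m with
  | zero =>
    rintro (_ | ℓ) h
    · omega
    · simp [myc]
  | succ n ih =>
    rintro (_ | ℓ) h
    · omega
    · rw [myc]
      rcases Nat.lt_or_ge n (2 * ℓ) with h1 | h1
      · rw [ih ℓ h1, ih (ℓ + 1) (by omega)]; ring
      · have hn : n = 2 * ℓ := by omega
        rw [ih (ℓ + 1) (by omega), hn]
        push_cast
        ring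

lemma myc_succ_zero (m : ℕ) : myc (m + 1) 0 = -myc m 0 := rfl

lemma myc_succ_succ (m ℓ : ℕ) :
    myc (m + 1) (ℓ + 1) = ((m : ℝ) - 2 * ℓ) * myc m ℓ - myc m (ℓ + 1) := rfl

lemma sum_rec (m : ℕ) (G t : ℝ) :
    -t * (∑ ℓ ∈ Finset.range (m / 2 + 1), myc m ℓ * G ^ ℓ * t ^ (m - 2 * ℓ)) +
      ∑ ℓ ∈ Finset.range (m / 2 + 1),
        myc m ℓ * G ^ ℓ * (((m - 2 * ℓ : ℕ) : ℝ) * t ^ (m - 2 * ℓ - 1) * G) =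
    ∑ ℓ ∈ Finset.range ((m + 1) / 2 + 1), myc (m + 1) ℓ * G ^ ℓ * t ^ (m + 1 - 2 * ℓ) := by
  have hpad : ∑ ℓ ∈ Finset.range ((m + 1) / 2 + 1), myc (m + 1) ℓ * G ^ ℓ * t ^ (m + 1 - 2 * ℓ)
      = ∑ ℓ ∈ Finset.range (m / 2 + 2), myc (m + 1) ℓ * G ^ ℓ * t ^ (m + 1 - 2 * ℓ) := by
    rcases Nat.even_or_odd m with ⟨k, hk⟩ | ⟨k, hk⟩
    · subst hk
      have h1 : (k + k + 1) / 2 = (k + k) / 2 := by omega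
      rw [h1, show (k + k) / 2 + 2 = ((k + k) / 2 + 1) + 1 from rfl,
        Finset.sum_range_succ (fun ℓ => myc (k + k + 1) ℓ * G ^ ℓ * t ^ (k + k + 1 - 2 * ℓ))
          ((k + k) / 2 + 1),
        myc_eq_zero (k + k + 1) ((k + k) / 2 + 1) (by omega)]
      ring
    · subst hk
      have h1 : (2 * k + 1 + 1) / 2 + 1 = 2 * k / 2 + 2 := by omega
      have h2 : (2 * k + 1) / 2 = 2 * k / 2 := by omega
      rw [h1, h2]
  rw [hpad, Finset.mul_sum,
    Finset.sum_range_succ' (fun ℓ => -t * (myc m ℓ * G ^ ℓ * t ^ (m - 2 * ℓ))) (m / 2),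
    Finset.sum_range_succ' (fun ℓ => myc (m + 1) ℓ * G ^ ℓ * t ^ (m + 1 - 2 * ℓ)) (m / 2 + 1)]
  have hsplit : ∑ i ∈ Finset.range (m / 2 + 1),
        myc (m + 1) (i + 1) * G ^ (i + 1) * t ^ (m + 1 - 2 * (i + 1))
      = ∑ i ∈ Finset.range (m / 2 + 1),
          myc m i * G ^ i * (((m - 2 * i : ℕ) : ℝ) * t ^ (m - 2 * i - 1) * G)
        - ∑ i ∈ Finset.range (m / 2 + 1),
            myc m (i + 1) * G ^ (i + 1) * t ^ (m + 1 - 2 * (i + 1)) := by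
    rw [← Finset.sum_sub_distrib]
    refine Finset.sum_congr rfl fun i hi => ?_
    simp only [Finset.mem_range] at hi
    have h2i : 2 * i ≤ m := by omega
    have hc : ((m - 2 * i : ℕ) : ℝ) = (m : ℝ) - 2 * i := by
      rw [Nat.cast_sub h2i]; push_cast; ring
    have he : m - 2 * i - 1 = m + 1 - 2 * (i + 1) := by omega
    rw [myc_succ_succ, hc, he]
    ring
  rw [hsplit, Finset.sum_range_succ (fun i => myc m (i + 1) * G ^ (i + 1) * t ^ (m + 1 - 2 * (i + 1))) (m / 2),
    myc_eq_zero m (m / 2 + 1) (by omega)]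
  have hneg : ∑ i ∈ Finset.range (m / 2), -t * (myc m (i + 1) * G ^ (i + 1) * t ^ (m - 2 * (i + 1)))
      = -∑ i ∈ Finset.range (m / 2), myc m (i + 1) * G ^ (i + 1) * t ^ (m + 1 - 2 * (i + 1)) := by
    rw [← Finset.sum_neg_distrib]
    refine Finset.sum_congr rfl fun i hi => ?_
    simp only [Finset.mem_range] at hi
    have he : m + 1 - 2 * (i + 1) = (m - 2 * (i + 1)) + 1 := by omega
    rw [he, pow_succ]
    ring
  rw [hneg, myc_succ_zero]
  simp only [pow_zero, Nat.sub_zero, Nat.mul_zero]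
  have : t ^ (m + 1) = t ^ m * t := pow_succ t m
  rw [this]
  ring

lemma gaussian_contDiff (d : ℕ) (a : ℝ) : ContDiff ℝ ⊤ (gaussianDensity d a) :=
  contDiff_const.mul (((contDiff_norm_sq ℝ).neg.div_const _).exp)

lemma gaussian_hasFDerivAt (d : ℕ) (a : ℝ) (u : EuclideanSpace ℝ (Fin d)) :
    HasFDerivAt (gaussianDensity d a)
      (((2 * Real.pi * a ^ 2) ^ (-(d : ℝ) / 2)) •
        (Real.exp (-‖u‖ ^ 2 / (2 * a ^ 2)) •
          ((-1 / (2 * a ^ 2)) • (2 • innerSL ℝ u)))) u := by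
  have hq : HasFDerivAt (fun y : EuclideanSpace ℝ (Fin d) => -‖y‖ ^ 2 / (2 * a ^ 2))
      ((-1 / (2 * a ^ 2)) • (2 • innerSL ℝ u)) u := by
    have h2 : HasDerivAt (fun r : ℝ => -r / (2 * a ^ 2)) (-1 / (2 * a ^ 2)) (‖u‖ ^ 2) := by
      simpa using ((hasDerivAt_id (‖u‖ ^ 2)).neg.div_const (2 * a ^ 2))
    exact h2.comp_hasFDerivAt u (hasStrictFDerivAt_norm_sq u).hasFDerivAt
  exact (hq.exp).const_mul _

lemma key (d : ℕ) (a : ℝ) (ha : 0 < a) (x : EuclideanSpace ℝ (Fin d)) :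
    ∀ (m : ℕ) (u : EuclideanSpace ℝ (Fin d)),
      iteratedFDeriv ℝ m (gaussianDensity d a) u (fun _ => x) =
        gaussianDensity d a u * ∑ ℓ ∈ Finset.range (m / 2 + 1),
          myc m ℓ * (‖x‖ ^ 2 / a ^ 2) ^ ℓ *
            ((a ^ 2)⁻¹ * (inner ℝ x · : _ → ℝ) u) ^ (m - 2 * ℓ) := by
  intro m
  induction m with
  | zero =>
    intro u
    simp [myc]
  | succ n ih =>
    intro u
    have ha2 : (a : ℝ) ^ 2 ≠ 0 := pow_ne_zero _ ha.ne'
    have hdiff : DifferentiableAt ℝ (iteratedFDeriv ℝ n (gaussianDensity d a)) u :=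
      ((gaussian_contDiff d a).differentiable_iteratedFDeriv
        (by exact Ne.lt_top (by simp))) u
    have htail : Fin.tail (fun _ : Fin (n + 1) => x) = fun _ : Fin n => x := rfl
    have h1 : iteratedFDeriv ℝ (n + 1) (gaussianDensity d a) u (fun _ => x) =
        fderiv ℝ (fun y => iteratedFDeriv ℝ n (gaussianDensity d a) y (fun _ => x)) u x := by
      rw [iteratedFDeriv_succ_apply_left, htail,
        fderiv_continuousMultilinear_apply_const_apply hdiff]
    have h2 : (fun y => iteratedFDeriv ℝ n (gaussianDensity d a) y (fun _ => x)) =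
        fun y => gaussianDensity d a y * ∑ ℓ ∈ Finset.range (n / 2 + 1),
          myc n ℓ * (‖x‖ ^ 2 / a ^ 2) ^ ℓ * ((a ^ 2)⁻¹ * (inner ℝ x y : ℝ)) ^ (n - 2 * ℓ) :=
      funext ih
    rw [h1, h2]
    -- derivative of the inner-product function
    have ht : HasFDerivAt (fun y : EuclideanSpace ℝ (Fin d) => (a ^ 2)⁻¹ * (inner ℝ x y : ℝ))
        ((a ^ 2)⁻¹ • innerSL ℝ x) u :=
      ((innerSL ℝ x).hasFDerivAt).const_mul ((a ^ 2)⁻¹)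
    have hS : HasFDerivAt
        (fun y => ∑ ℓ ∈ Finset.range (n / 2 + 1),
          myc n ℓ * (‖x‖ ^ 2 / a ^ 2) ^ ℓ * ((a ^ 2)⁻¹ * (inner ℝ x y : ℝ)) ^ (n - 2 * ℓ))
        (∑ ℓ ∈ Finset.range (n / 2 + 1),
          (myc n ℓ * (‖x‖ ^ 2 / a ^ 2) ^ ℓ) •
            ((((n - 2 * ℓ : ℕ) : ℝ) * ((a ^ 2)⁻¹ * (inner ℝ x u : ℝ)) ^ (n - 2 * ℓ - 1)) •
              ((a ^ 2)⁻¹ • innerSL ℝ x))) u :=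
      HasFDerivAt.fun_sum fun ℓ _ =>
        (((hasDerivAt_pow (n - 2 * ℓ) _).comp_hasFDerivAt u ht).const_mul _)
    have hF := (gaussian_hasFDerivAt d a u).fun_mul hS
    rw [hF.fderiv]
    simp only [ContinuousLinearMap.add_apply, ContinuousLinearMap.smul_apply,
      ContinuousLinearMap.coe_sum', Finset.sum_apply, innerSL_apply_apply, smul_eq_mul]
    have hxx : (inner ℝ x x : ℝ) = ‖x‖ ^ 2 := real_inner_self_eq_norm_sq x
    have hux : (inner ℝ u x : ℝ) = (inner ℝ x u : ℝ) := real_inner_comm x u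
    rw [hxx, nsmul_eq_mul, hux,
      ← sum_rec n (‖x‖ ^ 2 / a ^ 2) ((a ^ 2)⁻¹ * (inner ℝ x u : ℝ))]
    have hT : ∑ ℓ ∈ Finset.range (n / 2 + 1),
          myc n ℓ * (‖x‖ ^ 2 / a ^ 2) ^ ℓ *
            (((n - 2 * ℓ : ℕ) : ℝ) * ((a ^ 2)⁻¹ * (inner ℝ x u : ℝ)) ^ (n - 2 * ℓ - 1) *
              ((a ^ 2)⁻¹ * ‖x‖ ^ 2))
        = ∑ ℓ ∈ Finset.range (n / 2 + 1),
          myc n ℓ * (‖x‖ ^ 2 / a ^ 2) ^ ℓ *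
            (((n - 2 * ℓ : ℕ) : ℝ) * ((a ^ 2)⁻¹ * (inner ℝ x u : ℝ)) ^ (n - 2 * ℓ - 1) *
              (‖x‖ ^ 2 / a ^ 2)) :=
      Finset.sum_congr rfl fun ℓ _ => by ring
    rw [hT]
    simp only [gaussianDensity]
    ring

/-- the explicit directional-derivative formula for the isotropic Gaussian
density: there are coefficients `c_{m,ℓ}` satisfying the stated recurrence relations such that
`D^mφ_a(u)·x^{⊗m} = φ_a(u) ∑_{ℓ=0}^{[m/2]} c_{m,ℓ} a^{-2ℓ} ‖x‖₂^{2ℓ} (⟨u,x⟩/a²)^{m-2ℓ}`. -/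
theorem gaussian_directional_derivative_formula :
    ∃ c : ℕ → ℕ → ℝ,
      (∀ m : ℕ, c m 0 = (-1 : ℝ) ^ m) ∧
      c 2 1 = -1 ∧
      (∀ m : ℕ, 2 ≤ m → ∀ ℓ : ℕ, 1 ≤ ℓ → ℓ ≤ m / 2 →
        c (m + 1) ℓ = ((m : ℝ) - 2 * ℓ + 2) * c m (ℓ - 1) - c m ℓ) ∧
      (∀ m : ℕ, Odd m → c (m + 1) ((m + 1) / 2) = c m (m / 2)) ∧
      (∀ m : ℕ, Even m → 2 ≤ m → c (m + 1) ((m + 1) / 2) = c (m + 1) (m / 2)) ∧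
      ∀ (d : ℕ) (a : ℝ), 0 < a → ∀ (m : ℕ) (u x : EuclideanSpace ℝ (Fin d)),
        iteratedFDeriv ℝ m (gaussianDensity d a) u (fun _ => x) =
          gaussianDensity d a u * ∑ ℓ ∈ Finset.range (m / 2 + 1),
            c m ℓ * a ^ (-(2 * ℓ : ℤ)) * ‖x‖ ^ (2 * ℓ) *
              ((inner ℝ u x : ℝ) / a ^ 2) ^ (m - 2 * ℓ) := by
  refine ⟨myc, myc_zero, ?_, ?_, ?_, ?_, ?_⟩
  · norm_num [myc]
  · intro m hm ℓ hℓ1 hℓ2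
    obtain ⟨k, rfl⟩ : ∃ k, ℓ = k + 1 := ⟨ℓ - 1, by omega⟩
    rw [myc_succ_succ]
    simp only [Nat.add_sub_cancel]
    push_cast
    ring
  · rintro m ⟨k, rfl⟩
    have h1 : (2 * k + 1 + 1) / 2 = k + 1 := by omega
    have h2 : (2 * k + 1) / 2 = k := by omega
    rw [h1, h2, myc_succ_succ, myc_eq_zero (2 * k + 1) (k + 1) (by omega)]
    push_cast
    ring
  · rintro m ⟨k, rfl⟩ hm
    have h1 : (k + k + 1) / 2 = (k + k) / 2 := by omega
    rw [h1]
  · intro d a ha m u x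
    have ha' : (a : ℝ) ≠ 0 := ha.ne'
    rw [key d a ha x m u]
    congr 1
    refine Finset.sum_congr rfl fun ℓ hℓ => ?_
    have hinner : (inner ℝ u x : ℝ) = (inner ℝ x u : ℝ) := real_inner_comm x u
    rw [hinner,
      show (-(2 * ℓ : ℤ)) = -((2 * ℓ : ℕ) : ℤ) by push_cast; ring,
      zpow_neg, zpow_natCast,
      show ((a : ℝ) ^ 2)⁻¹ * (inner ℝ x u : ℝ) = (inner ℝ x u : ℝ) / a ^ 2 by ring,
      show (‖x‖ ^ 2 / a ^ 2 : ℝ) ^ ℓ = ‖x‖ ^ (2 * ℓ) * ((a : ℝ) ^ (2 * ℓ))⁻¹ by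
        rw [div_pow, ← pow_mul, ← pow_mul, div_eq_mul_inv]]
    ring
end
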